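/- Let p be prime, ℓ ≥ 2, and let G = Aut(ℤ/p^ℓℤ ⊕ ℤ/pℤ). Let Z = {diag(1 + p^{ℓ−1}u, 1) : u ∈ F_p} ⊆ G and H = {(1 + p^{ℓ−1}u, p^{ℓ−1}v; w, 1) : u, v, w ∈ F_p} ⊆ G, which is the kernel of the natural surjection G → (ℤ/p^{ℓ−1}ℤ)^× × F_p^×. Then H is isomorphic to the Heisenberg group over F_p via (1 + p^{ℓ−1}u, p^{ℓ−1}v; w, 1) ↦ (1, v, u; 0, 1, w; 0, 0, 1), and under this isomorphism Z corresponds to the center of the Heisenberg group. -/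

import Mathlib

/-- The Heisenberg group over a commutative ring `R`: triples `(u, v, w)` corresponding to
the unitriangular matrix `(1, v, u; 0, 1, w; 0, 0, 1)`. -/
@[ext]
structure Heis (R : Type) where
  u : R
  v : R
  w : R

namespace Heis

variable {R : Type} [CommRing R]

instance : Mul (Heis R) := ⟨fun a b => ⟨a.u + b.u + a.v * b.w, a.v + b.v, a.w + b.w⟩⟩
instance : One (Heis R) := ⟨⟨0, 0, 0⟩⟩
instance : Inv (Heis R) := ⟨fun a => ⟨-a.u + a.v * a.w, -a.v, -a.w⟩⟩

@[simp] lemma mul_u (a b : Heis R) : (a * b).u = a.u + b.u + a.v * b.w := rfl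
@[simp] lemma mul_v (a b : Heis R) : (a * b).v = a.v + b.v := rfl
@[simp] lemma mul_w (a b : Heis R) : (a * b).w = a.w + b.w := rfl
@[simp] lemma one_u : (1 : Heis R).u = 0 := rfl
@[simp] lemma one_v : (1 : Heis R).v = 0 := rfl
@[simp] lemma one_w : (1 : Heis R).w = 0 := rfl
@[simp] lemma inv_u (a : Heis R) : a⁻¹.u = -a.u + a.v * a.w := rfl
@[simp] lemma inv_v (a : Heis R) : a⁻¹.v = -a.v := rfl
@[simp] lemma inv_w (a : Heis R) : a⁻¹.w = -a.w := rfl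

instance : Group (Heis R) where
  mul_assoc a b c := by ext <;> simp <;> ring
  one_mul a := by ext <;> simp
  mul_one a := by ext <;> simp
  inv_mul_cancel a := by ext <;> simp [mul_comm]

end Heis

namespace Stmt14Aux

variable {p ℓ : ℕ}

/-- `P = p^(ℓ-1)` in `ZMod (p^ℓ)`. -/
def Pl (p ℓ : ℕ) : ZMod (p ^ ℓ) := (p : ZMod (p ^ ℓ)) ^ (ℓ - 1)

lemma pl0 : (p : ZMod (p ^ ℓ)) ^ ℓ = 0 := by
  rw [← Nat.cast_pow, ZMod.natCast_self]

lemma Pp (hℓ : 2 ≤ ℓ) : Pl p ℓ * (p : ZMod (p ^ ℓ)) = 0 := by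
  rw [Pl, ← pow_succ]
  have h : ℓ - 1 + 1 = ℓ := by omega
  rw [h, pl0]

lemma PP (hℓ : 2 ≤ ℓ) : Pl p ℓ * Pl p ℓ = 0 := by
  rw [Pl, ← pow_add]
  have h : ℓ - 1 + (ℓ - 1) = ℓ + (ℓ - 2) := by omega
  rw [h, pow_add, pl0, zero_mul]

lemma key2 (hℓ : 2 ≤ ℓ) (n : ℕ) :
    Pl p ℓ * ((n % p : ℕ) : ZMod (p ^ ℓ)) = Pl p ℓ * (n : ZMod (p ^ ℓ)) := by
  conv_rhs => rw [← Nat.div_add_mod n p]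
  push_cast
  rw [mul_add, ← mul_assoc, Pp hℓ, zero_mul, zero_add]

lemma keyval (hp : p.Prime) (hℓ : 2 ≤ ℓ) (c d : ZMod p) :
    Pl p ℓ * (((c + d).val : ℕ) : ZMod (p ^ ℓ)) =
      Pl p ℓ * (c.val : ZMod (p ^ ℓ)) + Pl p ℓ * (d.val : ZMod (p ^ ℓ)) := by
  have : NeZero p := ⟨hp.pos.ne'⟩
  rw [ZMod.val_add, key2 hℓ, Nat.cast_add, mul_add]

lemma keymul (hℓ : 2 ≤ ℓ) (c d : ZMod p) :
    Pl p ℓ * (((c * d).val : ℕ) : ZMod (p ^ ℓ)) =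
      Pl p ℓ * (c.val : ZMod (p ^ ℓ)) * (d.val : ZMod (p ^ ℓ)) := by
  rw [ZMod.val_mul, key2 hℓ, Nat.cast_mul, mul_assoc]

lemma selfcast (hp : p.Prime) (x : ZMod (p ^ ℓ)) : ((x.val : ℕ) : ZMod (p ^ ℓ)) = x := by
  have : NeZero (p ^ ℓ) := ⟨pow_ne_zero ℓ hp.pos.ne'⟩
  rw [ZMod.natCast_val, ZMod.cast_id]

lemma keyx (hp : p.Prime) (hℓ : 2 ≤ ℓ) (x : ZMod (p ^ ℓ)) :
    Pl p ℓ * ((x.val % p : ℕ) : ZMod (p ^ ℓ)) = Pl p ℓ * x := by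
  rw [key2 hℓ, selfcast hp]

lemma keyinj (hp : p.Prime) (hℓ : 2 ≤ ℓ) {c d : ZMod p}
    (h : Pl p ℓ * (c.val : ZMod (p ^ ℓ)) = Pl p ℓ * (d.val : ZMod (p ^ ℓ))) : c = d := by
  have : NeZero p := ⟨hp.pos.ne'⟩
  have hlt : ∀ e : ZMod p, p ^ (ℓ - 1) * e.val < p ^ ℓ := by
    intro e
    have h1 : p ^ (ℓ - 1) * e.val < p ^ (ℓ - 1) * p :=
      Nat.mul_lt_mul_of_pos_left (ZMod.val_lt e) (pow_pos hp.pos _)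
    have h2 : p ^ (ℓ - 1) * p = p ^ ℓ := by rw [← pow_succ]; congr 1; omega
    omega
  have hval : ∀ e : ZMod p,
      (Pl p ℓ * (e.val : ZMod (p ^ ℓ))).val = p ^ (ℓ - 1) * e.val := by
    intro e
    have : Pl p ℓ * (e.val : ZMod (p ^ ℓ)) = ((p ^ (ℓ - 1) * e.val : ℕ) : ZMod (p ^ ℓ)) := by
      rw [Pl]; push_cast; ring
    rw [this, ZMod.val_natCast, Nat.mod_eq_of_lt (hlt e)]
  have h2 : p ^ (ℓ - 1) * c.val = p ^ (ℓ - 1) * d.val := by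
    rw [← hval c, ← hval d, h]
  have h3 : c.val = d.val := Nat.eq_of_mul_eq_mul_left (Nat.pos_of_ne_zero (pow_ne_zero _ hp.pos.ne')) h2
  exact ZMod.val_injective _ h3

lemma annih (hp : p.Prime) (hℓ : 2 ≤ ℓ) (z : ZMod (p ^ ℓ))
    (hz : (p : ZMod (p ^ ℓ)) * z = 0) : ∃ k : ZMod p, z = Pl p ℓ * (k.val : ZMod (p ^ ℓ)) := by
  have hz' : (p ^ ℓ : ℕ) ∣ p * z.val := by
    have h0 : ((p * z.val : ℕ) : ZMod (p ^ ℓ)) = 0 := by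
      push_cast
      rw [selfcast hp]
      exact hz
    exact (ZMod.natCast_eq_zero_iff _ _).mp h0
  obtain ⟨c, hc⟩ := hz'
  have hpl : p ^ ℓ = p * p ^ (ℓ - 1) := by
    rw [← pow_succ']; congr 1; omega
  have hzv : z.val = p ^ (ℓ - 1) * c := by
    apply Nat.eq_of_mul_eq_mul_left hp.pos
    rw [hc, hpl]; ring
  refine ⟨(c : ZMod p), ?_⟩
  have : z = ((p ^ (ℓ - 1) * c : ℕ) : ZMod (p ^ ℓ)) := by rw [← hzv, selfcast hp]
  rw [this, ZMod.val_natCast, key2 hℓ]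
  push_cast
  rw [Pl]

end Stmt14Aux

namespace Stmt14Aux

variable {p ℓ : ℕ}

/-- The action of a Heisenberg element on `ZMod (p^ℓ) × ZMod p`. -/
def F (p ℓ : ℕ) (h' : ℓ ≠ 0) (a : Heis (ZMod p)) (z : ZMod (p ^ ℓ) × ZMod p) :
    ZMod (p ^ ℓ) × ZMod p :=
  (z.1 + (p : ZMod (p ^ ℓ)) ^ (ℓ - 1) *
      ((a.u.val : ZMod (p ^ ℓ)) * z.1 + (a.v.val : ZMod (p ^ ℓ)) * ((z.2.val : ℕ) : ZMod (p ^ ℓ))),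
    a.w * ZMod.castHom (dvd_pow_self p h') (ZMod p) z.1 + z.2)

lemma pi_eq (h' : ℓ ≠ 0) (hp : p.Prime) (x : ZMod (p ^ ℓ)) :
    ZMod.castHom (dvd_pow_self p h') (ZMod p) x = ((x.val : ℕ) : ZMod p) := by
  have : NeZero (p ^ ℓ) := ⟨pow_ne_zero ℓ hp.pos.ne'⟩
  rw [ZMod.castHom_apply, ← ZMod.natCast_val]

lemma key_pi (h' : ℓ ≠ 0) (hp : p.Prime) (hℓ : 2 ≤ ℓ) (x : ZMod (p ^ ℓ)) :
    Pl p ℓ * (((ZMod.castHom (dvd_pow_self p h') (ZMod p) x).val : ℕ) : ZMod (p ^ ℓ)) =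
      Pl p ℓ * x := by
  rw [pi_eq h' hp, ZMod.val_natCast, keyx hp hℓ]

lemma pi_P (h' : ℓ ≠ 0) (hℓ : 2 ≤ ℓ) (t : ZMod (p ^ ℓ)) :
    ZMod.castHom (dvd_pow_self p h') (ZMod p) (Pl p ℓ * t) = 0 := by
  rw [map_mul, Pl, map_pow, map_natCast, ZMod.natCast_self, zero_pow (by omega : ℓ - 1 ≠ 0),
    zero_mul]

lemma Fone (h' : ℓ ≠ 0) (z : ZMod (p ^ ℓ) × ZMod p) : F p ℓ h' 1 z = z := by
  simp [F]

lemma Fadd (h' : ℓ ≠ 0) (hp : p.Prime) (hℓ : 2 ≤ ℓ) (a : Heis (ZMod p))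
    (z z' : ZMod (p ^ ℓ) × ZMod p) : F p ℓ h' a (z + z') = F p ℓ h' a z + F p ℓ h' a z' := by
  simp only [F, Prod.fst_add, Prod.snd_add, Prod.mk_add_mk, Prod.mk.injEq, map_add]
  constructor
  · have h1 := keyval hp hℓ z.2 z'.2
    rw [Pl] at h1
    linear_combination (a.v.val : ZMod (p ^ ℓ)) * h1
  · ring

lemma Fcomp (h' : ℓ ≠ 0) (hp : p.Prime) (hℓ : 2 ≤ ℓ) (a b : Heis (ZMod p))
    (z : ZMod (p ^ ℓ) × ZMod p) :
    F p ℓ h' (a * b) z = F p ℓ h' a (F p ℓ h' b z) := by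
  obtain ⟨x, y⟩ := z
  simp only [F, Heis.mul_u, Heis.mul_v, Heis.mul_w, map_add, map_mul]
  have h1 := keyval hp hℓ (a.u + b.u) (a.v * b.w)
  have h2 := keyval hp hℓ a.u b.u
  have h3 := keymul hℓ a.v b.w
  have h4 := keyval hp hℓ a.v b.v
  have hY := keyval hp hℓ (b.w * ZMod.castHom (dvd_pow_self p h') (ZMod p) x) y
  have hm := keymul hℓ b.w (ZMod.castHom (dvd_pow_self p h') (ZMod p) x)
  have hpi := key_pi h' hp hℓ x
  have hPP := PP (p := p) hℓ
  rw [Pl] at h1 h2 h3 h4 hY hm hpi hPP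
  simp only [map_pow, map_natCast, ZMod.natCast_self, zero_pow (by omega : ℓ - 1 ≠ 0),
    zero_mul, Prod.mk.injEq]
  constructor
  · linear_combination x * h1 + x * h2 + x * h3 + ((y.val : ℕ) : ZMod (p ^ ℓ)) * h4 -
      (a.v.val : ZMod (p ^ ℓ)) * hY - (a.v.val : ZMod (p ^ ℓ)) * hm -
      (a.v.val : ZMod (p ^ ℓ)) * (b.w.val : ZMod (p ^ ℓ)) * hpi -
      (a.u.val : ZMod (p ^ ℓ)) * ((b.u.val : ZMod (p ^ ℓ)) * x +
        (b.v.val : ZMod (p ^ ℓ)) * ((y.val : ℕ) : ZMod (p ^ ℓ))) * hPP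
  · ring

def eAut (hp : p.Prime) (hℓ : 2 ≤ ℓ) (a : Heis (ZMod p)) : AddAut (ZMod (p ^ ℓ) × ZMod p) where
  toFun := F p ℓ (Nat.ne_zero_of_lt hℓ) a
  invFun := F p ℓ (Nat.ne_zero_of_lt hℓ) a⁻¹
  left_inv z := by rw [← Fcomp (Nat.ne_zero_of_lt hℓ) hp hℓ, inv_mul_cancel, Fone]
  right_inv z := by rw [← Fcomp (Nat.ne_zero_of_lt hℓ) hp hℓ, mul_inv_cancel, Fone]
  map_add' := Fadd (Nat.ne_zero_of_lt hℓ) hp hℓ a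

def eHom (hp : p.Prime) (hℓ : 2 ≤ ℓ) :
    Heis (ZMod p) →* Multiplicative (AddAut (ZMod (p ^ ℓ) × ZMod p)) :=
  MonoidHom.mk' (fun a => Multiplicative.ofAdd (eAut hp hℓ a)) fun a b => AddEquiv.ext fun z => by
    exact Fcomp (Nat.ne_zero_of_lt hℓ) hp hℓ a b z

lemma eHom_apply (hp : p.Prime) (hℓ : 2 ≤ ℓ) (a : Heis (ZMod p))
    (z : ZMod (p ^ ℓ) × ZMod p) : Multiplicative.toAdd (eHom hp hℓ a) z = F p ℓ (Nat.ne_zero_of_lt hℓ) a z := rfl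

end Stmt14Aux
/-- The Heisenberg kernel inside `G = Aut(ℤ/p^ℓℤ ⊕ ℤ/pℤ)`: there is an injective
homomorphism `e` from the Heisenberg group over `F_p` into `G`, given by
`(u,v,w) ↦ (1+p^(ℓ−1)u, p^(ℓ−1)v; w, 1)`, whose image is exactly the kernel of the natural
surjection `G → (ℤ/p^(ℓ−1)ℤ)ˣ × F_pˣ` (characterized by fixing `pM` pointwise and inducing
the identity in the second coordinate), and under which the center of the Heisenberg group
corresponds to `Z = {diag(1 + p^(ℓ−1)u, 1)}`. -/
theorem stmt_14 (p ℓ : ℕ) (hp : p.Prime) (hℓ : 2 ≤ ℓ) :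
    ∃ e : Heis (ZMod p) →* Multiplicative (AddAut (ZMod (p ^ ℓ) × ZMod p)),
      Function.Injective e ∧
      (∀ (a : Heis (ZMod p)) (x : ZMod (p ^ ℓ)) (y : ZMod p),
        (Multiplicative.toAdd (e a)) (x, y) =
          (x + (p : ZMod (p ^ ℓ)) ^ (ℓ - 1) *
              ((a.u.val : ZMod (p ^ ℓ)) * x +
                (a.v.val : ZMod (p ^ ℓ)) * (y.val : ZMod (p ^ ℓ))),
            a.w * ZMod.castHom (dvd_pow_self p (by omega : ℓ ≠ 0)) (ZMod p) x + y)) ∧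
      (Set.range (Multiplicative.toAdd ∘ ⇑e) =
        {φ : AddAut (ZMod (p ^ ℓ) × ZMod p) |
          (∀ t : ZMod (p ^ ℓ), φ ((p : ZMod (p ^ ℓ)) * t, 0) = ((p : ZMod (p ^ ℓ)) * t, 0)) ∧
          ∀ y : ZMod p, (φ (0, y)).2 = y}) ∧
      ((Multiplicative.toAdd ∘ ⇑e) '' (Subgroup.center (Heis (ZMod p)) : Set (Heis (ZMod p))) =
        {φ : AddAut (ZMod (p ^ ℓ) × ZMod p) | ∃ u : ZMod p,
          ∀ (x : ZMod (p ^ ℓ)) (y : ZMod p),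
            φ (x, y) = (x + (p : ZMod (p ^ ℓ)) ^ (ℓ - 1) * (u.val : ZMod (p ^ ℓ)) * x, y)}) := by
  classical
  have h' : ℓ ≠ 0 := by omega
  haveI : NeZero p := ⟨hp.pos.ne'⟩
  haveI : NeZero (p ^ ℓ) := ⟨pow_ne_zero ℓ hp.pos.ne'⟩
  open Stmt14Aux in
  refine ⟨Stmt14Aux.eHom hp hℓ, ?_, ?_, ?_, ?_⟩
  · -- injectivity
    intro a b hab
    have h1 : Stmt14Aux.F p ℓ h' a (1, 0) = Stmt14Aux.F p ℓ h' b (1, 0) :=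
      congrArg (fun φ : AddAut (ZMod (p ^ ℓ) × ZMod p) => φ (1, 0)) hab
    have h2 : Stmt14Aux.F p ℓ h' a (0, 1) = Stmt14Aux.F p ℓ h' b (0, 1) :=
      congrArg (fun φ : AddAut (ZMod (p ^ ℓ) × ZMod p) => φ (0, 1)) hab
    simp only [Stmt14Aux.F, ZMod.val_zero, Nat.cast_zero, mul_zero, add_zero, mul_one, map_one,
      map_zero, zero_add, ZMod.val_one_eq_one_mod, Prod.mk.injEq, add_right_inj,
      Nat.mod_eq_of_lt hp.one_lt, Nat.cast_one, zero_mul] at h1 h2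
    ext
    exacts [Stmt14Aux.keyinj hp hℓ h1.1, Stmt14Aux.keyinj hp hℓ h2.1, h1.2]
  · -- formula
    exact fun a x y => rfl
  · -- range
    ext φ
    simp only [Set.mem_range, Set.mem_setOf_eq]
    constructor
    · rintro ⟨a, rfl⟩
      have hPp := Stmt14Aux.Pp (p := p) hℓ
      rw [Stmt14Aux.Pl] at hPp
      constructor
      · intro t
        show Stmt14Aux.F p ℓ h' a ((p : ZMod (p ^ ℓ)) * t, 0) = _
        simp only [Stmt14Aux.F, ZMod.val_zero, Nat.cast_zero, mul_zero, add_zero, map_mul,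
          map_natCast, ZMod.natCast_self, zero_mul, Prod.mk.injEq]
        constructor
        · linear_combination (a.u.val : ZMod (p ^ ℓ)) * t * hPp
        · trivial
      · intro y
        show (Stmt14Aux.F p ℓ h' a (0, y)).2 = y
        simp [Stmt14Aux.F]
    · rintro ⟨hfix, hsec⟩
      have hone : ((p : ℕ) • ((1 : ZMod (p ^ ℓ)), (0 : ZMod p))) = ((p : ZMod (p ^ ℓ)) * 1, (0 : ZMod p)) := by
        simp [Prod.smul_mk, nsmul_eq_mul]
      have e1 := hfix 1
      rw [← hone, map_nsmul] at e1
      have e1f := congrArg Prod.fst e1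
      simp only [Prod.smul_fst, nsmul_eq_mul, Prod.fst_mul, Prod.fst_natCast, mul_one] at e1f
      have hann1 : (p : ZMod (p ^ ℓ)) * ((φ (1, 0)).1 - 1) = 0 := by
        rw [mul_sub, e1f, mul_one, sub_self]
      obtain ⟨u, hu⟩ := Stmt14Aux.annih hp hℓ _ hann1
      have hz0 : ((p : ℕ) • ((0 : ZMod (p ^ ℓ)), (1 : ZMod p))) = (0 : ZMod (p ^ ℓ) × ZMod p) := by
        simp [Prod.smul_mk, nsmul_eq_mul, Prod.ext_iff]
      have e2 : (p : ℕ) • φ (0, 1) = 0 := by rw [← map_nsmul, hz0, map_zero]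
      have e2f := congrArg Prod.fst e2
      simp only [Prod.smul_fst, nsmul_eq_mul, Prod.fst_mul, Prod.fst_natCast, Prod.fst_zero] at e2f
      obtain ⟨v, hv⟩ := Stmt14Aux.annih hp hℓ _ e2f
      have hδ : (φ (0, 1)).2 = 1 := hsec 1
      refine ⟨⟨u, v, (φ (1, 0)).2⟩, ?_⟩
      have hsplit : ∀ (x : ZMod (p ^ ℓ)) (y : ZMod p),
          φ (x, y) = x.val • φ (1, 0) + y.val • φ (0, 1) := by
        intro x y
        rw [← map_nsmul, ← map_nsmul, ← map_add]
        congr 1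
        simp [Prod.smul_mk, nsmul_eq_mul, Prod.ext_iff, ZMod.natCast_val, ZMod.cast_id]
      refine AddEquiv.ext fun z => ?_
      obtain ⟨x, y⟩ := z
      rw [show ((Multiplicative.toAdd ∘ Stmt14Aux.eHom hp hℓ) ⟨u, v, (φ (1, 0)).2⟩) (x, y) =
        Stmt14Aux.F p ℓ h' ⟨u, v, (φ (1, 0)).2⟩ (x, y) from rfl]
      conv_rhs => rw [hsplit]
      have hα : (φ (1, 0)).1 = 1 + Stmt14Aux.Pl p ℓ * (u.val : ZMod (p ^ ℓ)) := by
        rw [← hu]; ring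
      rw [Stmt14Aux.Pl] at hα hv
      refine Prod.ext ?_ ?_
      · simp only [Stmt14Aux.F, Prod.fst_add, nsmul_eq_mul, Prod.fst_mul, Prod.fst_natCast,
          hα, hv, Stmt14Aux.selfcast hp x]
        ring
      · have hy : ((y.val : ℕ) : ZMod p) = y := ZMod.natCast_rightInverse y
        simp only [Stmt14Aux.F, Prod.snd_add, nsmul_eq_mul, Prod.snd_mul, Prod.snd_natCast,
          hδ, mul_one, Stmt14Aux.pi_eq h' hp, hy]
        ring
  · -- center
    ext φ
    simp only [Set.mem_image, Set.mem_setOf_eq, SetLike.mem_coe]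
    constructor
    · rintro ⟨a, ha, rfl⟩
      have h1 := Subgroup.mem_center_iff.mp ha ⟨0, 1, 0⟩
      have h2 := Subgroup.mem_center_iff.mp ha ⟨0, 0, 1⟩
      have hw : a.w = 0 := by
        have := congrArg Heis.u h1
        simpa using this
      have hv : a.v = 0 := by
        have := congrArg Heis.u h2
        simpa using this.symm
      refine ⟨a.u, fun x y => ?_⟩
      show Stmt14Aux.F p ℓ h' a (x, y) = _
      simp only [Stmt14Aux.F, hv, hw, ZMod.val_zero, Nat.cast_zero, zero_mul, mul_zero,
        add_zero, zero_add, Prod.mk.injEq]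
      exact ⟨by ring, trivial⟩
    · rintro ⟨u, hu⟩
      refine ⟨⟨u, 0, 0⟩, Subgroup.mem_center_iff.mpr fun b => ?_, ?_⟩
      · ext <;> simp <;> ring
      · refine AddEquiv.ext fun z => ?_
        obtain ⟨x, y⟩ := z
        rw [hu x y]
        show Stmt14Aux.F p ℓ h' ⟨u, 0, 0⟩ (x, y) = _
        simp only [Stmt14Aux.F, ZMod.val_zero, Nat.cast_zero, zero_mul, mul_zero,
          add_zero, zero_add, Prod.mk.injEq]
        exact ⟨by ring, trivial⟩
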